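/- Let α ∈ (0,1) and let θ* ∈ ℝ^d satisfy ∇J(θ*) = 0 (i.e., θ* is a stationary point of the expected return). Define the polynomially-improved policy I^{1/α}π_{θ*} by (I^{1/α}π_{θ*})(τ) = R(τ)^{1/α} π_{θ*}(τ)/Z with Z = Σ_τ R(τ)^{1/α} π_{θ*}(τ). Then θ* is a critical point of the map θ ↦ D^α(I^{1/α}π_{θ*} ‖ π_θ); that is, the gradient of the Rényi α-divergence projection objective at θ = θ* is zero, so the optimal policy is a fixed point of the composition of the polynomial improvement operator I^{1/α} and the α-divergence projection. -/

import Mathlib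

/-- Expected return `J(π) = ∑ τ, R τ * π τ`. -/
noncomputable def Jexp {T : Type*} [Fintype T] (R π : T → ℝ) : ℝ := ∑ τ, R τ * π τ

/-- Rényi divergence of order `α` between strictly positive pmfs:
`D^α(p‖q) = (1/(α−1)) * log (∑ τ, p τ ^ α * q τ ^ (1−α))`. -/
noncomputable def renyiDiv {T : Type*} [Fintype T] (α : ℝ) (p q : T → ℝ) : ℝ :=
  (1 / (α - 1)) * Real.log (∑ τ, p τ ^ α * q τ ^ (1 - α))

/-- Polynomially-improved policy `(I^{1/α}π)(τ) = R τ ^ (1/α) * π τ / Z` with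
`Z = ∑ τ, R τ ^ (1/α) * π τ`. -/
noncomputable def polyImp {T : Type*} [Fintype T] (α : ℝ) (R π : T → ℝ) (τ : T) : ℝ :=
  R τ ^ (1 / α) * π τ / ∑ τ', R τ' ^ (1 / α) * π τ'

/-- If `θ*` is a stationary point of the expected return `J` and `α ∈ (0,1)`, then `θ*`
is a critical point of the Rényi `α`-divergence projection objective
`θ ↦ D^α(I^{1/α}π_{θ*} ‖ π_θ)`: the optimal policy is a fixed point of the composition of
the polynomial improvement operator `I^{1/α}` and the `α`-divergence projection. -/
theorem fixed_point_alpha_divergence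
    {T : Type*} [Fintype T] [Nonempty T] {d : ℕ}
    (α : ℝ) (hα0 : 0 < α) (hα1 : α < 1)
    (R : T → ℝ) (hR : ∀ τ, 0 < R τ)
    (π : EuclideanSpace ℝ (Fin d) → T → ℝ)
    (hπpos : ∀ θ τ, 0 < π θ τ)
    (hπsum : ∀ θ, ∑ τ, π θ τ = 1)
    (hπdiff : ∀ τ, Differentiable ℝ (fun θ => π θ τ))
    (θs : EuclideanSpace ℝ (Fin d))
    (hstat : gradient (fun θ => Jexp R (π θ)) θs = 0) :
    gradient (fun θ => renyiDiv α (polyImp α R (π θs)) (π θ)) θs = 0 := by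
  set L : T → (EuclideanSpace ℝ (Fin d)) →L[ℝ] ℝ :=
    fun τ => fderiv ℝ (fun θ => π θ τ) θs with hLdef
  have hLd : ∀ τ, HasFDerivAt (fun θ => π θ τ) (L τ) θs :=
    fun τ => ((hπdiff τ) θs).hasFDerivAt
  have hJd : HasFDerivAt (fun θ => Jexp R (π θ)) (∑ τ, R τ • L τ) θs := by
    unfold Jexp
    exact HasFDerivAt.fun_sum fun τ _ => (hLd τ).const_mul (R τ)
  have hfJ : fderiv ℝ (fun θ => Jexp R (π θ)) θs = 0 := by
    rw [gradient] at hstat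
    exact ((InnerProductSpace.toDual ℝ _).symm.map_eq_zero_iff).mp hstat
  have hsumL : (∑ τ, R τ • L τ) = 0 := by rw [← hJd.fderiv, hfJ]
  set Z : ℝ := ∑ τ', R τ' ^ (1 / α) * π θs τ' with hZ
  have hZpos : 0 < Z := Finset.sum_pos (fun τ _ =>
    mul_pos (Real.rpow_pos_of_pos (hR τ) _) (hπpos θs τ)) Finset.univ_nonempty
  set p : T → ℝ := polyImp α R (π θs) with hp
  have hkey : ∀ τ, p τ ^ α * ((1 - α) * π θs τ ^ (1 - α - 1)) = ((1 - α) / Z ^ α) * R τ := by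
    intro τ
    have hπτ := hπpos θs τ
    have hRa : (R τ ^ (1 / α)) ^ α = R τ := by
      rw [← Real.rpow_mul (hR τ).le, one_div_mul_cancel hα0.ne', Real.rpow_one]
    have hpa : p τ ^ α = R τ * π θs τ ^ α / Z ^ α := by
      rw [hp]
      unfold polyImp
      rw [← hZ, Real.div_rpow (mul_pos (Real.rpow_pos_of_pos (hR τ) _) hπτ).le hZpos.le,
        Real.mul_rpow (Real.rpow_pos_of_pos (hR τ) _).le hπτ.le, hRa]
    have hone : π θs τ ^ α * π θs τ ^ (1 - α - 1) = 1 := by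
      rw [← Real.rpow_add hπτ]
      norm_num
    rw [hpa]
    calc R τ * π θs τ ^ α / Z ^ α * ((1 - α) * π θs τ ^ (1 - α - 1))
        = ((1 - α) / Z ^ α) * R τ * (π θs τ ^ α * π θs τ ^ (1 - α - 1)) := by ring
      _ = ((1 - α) / Z ^ α) * R τ := by rw [hone, mul_one]
  have hSd : HasFDerivAt (fun θ => ∑ τ, p τ ^ α * π θ τ ^ (1 - α))
      (∑ τ, (p τ ^ α * ((1 - α) * π θs τ ^ (1 - α - 1))) • L τ) θs := by
    apply HasFDerivAt.fun_sum
    intro τ _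
    have h : HasFDerivAt (fun θ => p τ ^ α * π θ τ ^ (1 - α))
        ((p τ ^ α) • (((1 - α) * π θs τ ^ (1 - α - 1)) • L τ)) θs :=
      ((hLd τ).rpow_const (p := 1 - α) (Or.inl (hπpos θs τ).ne')).const_mul (p τ ^ α)
    rw [smul_smul] at h
    exact h
  have h0 : (∑ τ, (p τ ^ α * ((1 - α) * π θs τ ^ (1 - α - 1))) • L τ) = 0 := by
    simp_rw [hkey, mul_smul, ← Finset.smul_sum, hsumL, smul_zero]
  rw [h0] at hSd
  have hSpos : 0 < ∑ τ, p τ ^ α * π θs τ ^ (1 - α) :=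
    Finset.sum_pos (fun τ _ => mul_pos
      (Real.rpow_pos_of_pos (div_pos (mul_pos (Real.rpow_pos_of_pos (hR τ) _) (hπpos θs τ)) hZpos) _)
      (Real.rpow_pos_of_pos (hπpos θs τ) _)) Finset.univ_nonempty
  have hfd : HasFDerivAt (fun θ => renyiDiv α p (π θ)) (0 : EuclideanSpace ℝ (Fin d) →L[ℝ] ℝ) θs := by
    unfold renyiDiv
    have hlog : HasFDerivAt (fun θ => Real.log (∑ τ, p τ ^ α * π θ τ ^ (1 - α)))
        ((∑ τ, p τ ^ α * π θs τ ^ (1 - α))⁻¹ • (0 : EuclideanSpace ℝ (Fin d) →L[ℝ] ℝ)) θs :=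
      hSd.log hSpos.ne'
    have h2 : HasFDerivAt (fun θ => 1 / (α - 1) * Real.log (∑ τ, p τ ^ α * π θ τ ^ (1 - α)))
        ((1 / (α - 1)) • ((∑ τ, p τ ^ α * π θs τ ^ (1 - α))⁻¹ • (0 : EuclideanSpace ℝ (Fin d) →L[ℝ] ℝ))) θs :=
      hlog.const_mul (1 / (α - 1))
    simpa using h2
  have hg : HasGradientAt (fun θ => renyiDiv α p (π θ)) 0 θs := by
    rw [hasGradientAt_iff_hasFDerivAt]
    simpa using hfd
  exact hg.gradient
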